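/- Let ρ(·|x) be conditional probability measures on ℝ satisfying the moment condition ∫ y^{2l} dρ(y|x) ≤ l! M^l ν for all l ∈ ℕ, for constants M > 0 and ν ≥ 1. Then for every l ≥ 2 and every x, ∫ |y² - E[y²|x]|^l dρ(y|x) ≤ (1/2) l! (Mν)^{l-2} (2Mν)², where E[y²|x] = ∫ y² dρ(y|x) ≤ Mν. -/

import Mathlib

open MeasureTheory

/-- Bernstein moment condition for y² under a conditional measure satisfying
    ∫ y^{2l} dρ ≤ l! M^l ν for all l ≥ 1 (with M > 0, ν ≥ 1): for every l ≥ 2,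
    ∫ |y² - E[y²]|^l dρ ≤ (1/2) l! (Mν)^{l-2} (2Mν)², and E[y²] ≤ Mν. -/
theorem bernstein_moment_ysq (ρ : Measure ℝ) [IsProbabilityMeasure ρ]
    (M ν : ℝ) (hM : 0 < M) (hν : 1 ≤ ν)
    (hint : ∀ l : ℕ, 1 ≤ l → Integrable (fun y : ℝ => |y| ^ (2 * l)) ρ)
    (hmom : ∀ l : ℕ, 1 ≤ l → ∫ y, y ^ (2 * l) ∂ρ ≤ (l.factorial : ℝ) * M ^ l * ν) :
    (∫ y, y ^ 2 ∂ρ) ≤ M * ν ∧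
    ∀ l : ℕ, 2 ≤ l →
      (∫ y, |y ^ 2 - ∫ y', y' ^ 2 ∂ρ| ^ l ∂ρ) ≤
        (1 / 2) * (l.factorial : ℝ) * (M * ν) ^ (l - 2) * (2 * M * ν) ^ 2 := by
  set m := ∫ y, y ^ 2 ∂ρ with hmdef
  have hm0 : 0 ≤ m := integral_nonneg fun y => sq_nonneg y
  have hm : m ≤ M * ν := by
    have := hmom 1 le_rfl
    simpa using this
  have hMν : 0 < M * ν := lt_of_lt_of_le hM (by nlinarith)
  refine ⟨hm, fun l hl => ?_⟩
  have hl1 : 1 ≤ l := le_trans (by norm_num) hl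
  -- pointwise bound
  have hptw : ∀ y : ℝ, |y ^ 2 - m| ^ l ≤ |y| ^ (2 * l) + m ^ l := by
    intro y
    have h1 : |y ^ 2 - m| ≤ max (y ^ 2) m := by
      rcases le_total m (y ^ 2) with h | h
      · rw [abs_of_nonneg (by linarith)]
        exact le_max_of_le_left (by linarith)
      · rw [abs_of_nonpos (by linarith)]
        exact le_max_of_le_right (by nlinarith [sq_nonneg y])
    have h2 : |y ^ 2 - m| ^ l ≤ (max (y ^ 2) m) ^ l :=
      pow_le_pow_left₀ (abs_nonneg _) h1 l
    have h3 : (max (y ^ 2) m) ^ l ≤ (y ^ 2) ^ l + m ^ l := by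
      rcases max_cases (y ^ 2) m with ⟨he, _⟩ | ⟨he, _⟩ <;> rw [he] <;> nlinarith [pow_nonneg (sq_nonneg y) l, pow_nonneg hm0 l]
    have h4 : (y ^ 2) ^ l = |y| ^ (2 * l) := by
      rw [pow_mul, sq_abs]
    linarith [h2, h3, h4 ▸ h3]
  have hintR : Integrable (fun y : ℝ => |y| ^ (2 * l) + m ^ l) ρ :=
    (hint l hl1).add (integrable_const _)
  have hintL : Integrable (fun y : ℝ => |y ^ 2 - m| ^ l) ρ := by
    refine hintR.mono' ?_ ?_
    · exact (Continuous.pow (continuous_abs.comp (by continuity)) l).aestronglyMeasurable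
    · refine Filter.Eventually.of_forall fun y => ?_
      rw [Real.norm_eq_abs, abs_pow, abs_abs]
      exact hptw y
  have step1 : (∫ y, |y ^ 2 - m| ^ l ∂ρ) ≤ ∫ y, (|y| ^ (2 * l) + m ^ l) ∂ρ :=
    integral_mono hintL hintR hptw
  have step2 : (∫ y, (|y| ^ (2 * l) + m ^ l) ∂ρ)
      = (∫ y, y ^ (2 * l) ∂ρ) + m ^ l := by
    rw [integral_add (hint l hl1) (integrable_const _), integral_const]
    simp only [measure_univ, probReal_univ, ENNReal.toReal_one, one_smul]
    congr 1
    refine integral_congr_ae (Filter.Eventually.of_forall fun y => ?_)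
    show |y| ^ (2 * l) = y ^ (2 * l)
    rw [pow_mul, sq_abs, ← pow_mul]
  have hmoml := hmom l hl1
  -- arithmetic: l! M^l ν + (Mν)^l ≤ 2 l! (Mν)^l
  have hfac : (1 : ℝ) ≤ (l.factorial : ℝ) := by exact_mod_cast Nat.one_le_iff_ne_zero.mpr l.factorial_ne_zero
  have hνl : ν ≤ ν ^ l := le_self_pow₀ (by linarith) (by omega)
  have harith : (l.factorial : ℝ) * M ^ l * ν + m ^ l ≤ 2 * (l.factorial : ℝ) * (M * ν) ^ l := by
    have hml : m ^ l ≤ (M * ν) ^ l := pow_le_pow_left₀ hm0 hm l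
    have h1 : (l.factorial : ℝ) * M ^ l * ν ≤ (l.factorial : ℝ) * (M * ν) ^ l := by
      rw [mul_pow]
      have : M ^ l * ν ≤ M ^ l * ν ^ l :=
        mul_le_mul_of_nonneg_left hνl (pow_nonneg hM.le l)
      nlinarith
    have h2 : (M * ν) ^ l ≤ (l.factorial : ℝ) * (M * ν) ^ l := by
      nlinarith [pow_nonneg hMν.le l]
    linarith
  have hRHS : (1 / 2) * (l.factorial : ℝ) * (M * ν) ^ (l - 2) * (2 * M * ν) ^ 2
      = 2 * (l.factorial : ℝ) * (M * ν) ^ l := by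
    have : (M * ν) ^ (l - 2) * (M * ν) ^ 2 = (M * ν) ^ l := by
      rw [← pow_add, Nat.sub_add_cancel hl]
    nlinarith [this]
  rw [hRHS]
  calc (∫ y, |y ^ 2 - m| ^ l ∂ρ) ≤ (∫ y, y ^ (2 * l) ∂ρ) + m ^ l := by
        rw [← step2]; exact step1
    _ ≤ (l.factorial : ℝ) * M ^ l * ν + m ^ l := by linarith
    _ ≤ 2 * (l.factorial : ℝ) * (M * ν) ^ l := harith
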